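/- arXiv:1701.07365 — 5 statements merged into one kernel-verified Lean document; each statement's English description precedes it below -/
import Mathlib

section
/- Let F : {-1,1}^ℕ → ℝ depend on finitely many coordinates under the product Bernoulli measure P = ⊗_k (p_k δ_{+1} + q_k δ_{−1}), and suppose F is integrable. Then Var(F) ≤ E[Σ_k (D_k F)^2], where D_k F := √(p_k q_k)(F_k^+ − F_k^−). (Discrete Poincaré inequality.) -/
open Finset

/-- Discrete Malliavin derivative on the finite cube `{-1,1}^m` (coordinates
encoded by `Bool`, `true ↔ +1`). -/
noncomputable def Dfin {m : ℕ} (p q : Fin m → ℝ) (F : (Fin m → Bool) → ℝ) (k : Fin m)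
    (ω : Fin m → Bool) : ℝ :=
  Real.sqrt (p k * q k) * (F (Function.update ω k true) - F (Function.update ω k false))

/-- Expectation under the product Bernoulli measure `⊗_k (p_k δ_{+1} + q_k δ_{-1})`
on `{-1,1}^m`. -/
noncomputable def Efin {m : ℕ} (p q : Fin m → ℝ) (F : (Fin m → Bool) → ℝ) : ℝ :=
  ∑ ω : Fin m → Bool, (∏ k, if ω k then p k else q k) * F ω

lemma Efin_mono {m : ℕ} (p q : Fin m → ℝ) (hp : ∀ k, p k ∈ Set.Ioo (0 : ℝ) 1)
    (hq : ∀ k, q k = 1 - p k) {f g : (Fin m → Bool) → ℝ} (h : ∀ ω, f ω ≤ g ω) :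
    Efin p q f ≤ Efin p q g := by
  refine Finset.sum_le_sum fun ω _ => ?_
  have hw : 0 ≤ ∏ k, if ω k then p k else q k := by
    refine Finset.prod_nonneg fun k _ => ?_
    have h1 := (hp k).1
    have h2 := (hp k).2
    have h3 := hq k
    by_cases hb : ω k <;> simp [hb] <;> linarith
  exact mul_le_mul_of_nonneg_left (h ω) hw

lemma Efin_add {m : ℕ} (p q : Fin m → ℝ) (f g : (Fin m → Bool) → ℝ) :
    Efin p q (fun ω => f ω + g ω) = Efin p q f + Efin p q g := by
  simp [Efin, mul_add, Finset.sum_add_distrib]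

lemma Efin_cons {m : ℕ} (p q : Fin (m + 1) → ℝ) (F : (Fin (m + 1) → Bool) → ℝ) :
    Efin p q F = Efin (fun j => p j.succ) (fun j => q j.succ)
      (fun ω' => p 0 * F (Fin.cons true ω') + q 0 * F (Fin.cons false ω')) := by
  rw [Efin, ← (Fin.consEquiv (fun _ => Bool)).sum_comp (fun ω => (∏ k, if ω k then p k else q k) * F ω)]
  rw [Fintype.sum_prod_type]
  simp only [Fin.consEquiv_apply, Fin.prod_univ_succ, Fin.cons_zero,
    Fin.cons_succ, Fintype.sum_bool, Efin]
  rw [← Finset.sum_add_distrib]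
  congr 1
  funext ω'
  simp only [Fin.consEquiv, Equiv.coe_fn_mk, if_true, Bool.false_eq_true, ite_false]
  ring


/-- Discrete Poincaré inequality: `Var(F) ≤ E[Σ_k (D_k F)^2]` for functionals of
finitely many Rademacher coordinates. -/
theorem stmt2 {m : ℕ} (p q : Fin m → ℝ) (hp : ∀ k, p k ∈ Set.Ioo (0 : ℝ) 1)
    (hq : ∀ k, q k = 1 - p k) (F : (Fin m → Bool) → ℝ) :
    Efin p q (fun ω => F ω ^ 2) - (Efin p q F) ^ 2
      ≤ Efin p q (fun ω => ∑ k, (Dfin p q F k ω) ^ 2) := by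
  induction m with
  | zero =>
    simp [Efin]
  | succ n ih =>
    have h0p := (hp 0).1
    have h0p1 := (hp 0).2
    have h0q : q 0 = 1 - p 0 := hq 0
    have hpq0 : (0:ℝ) ≤ p 0 * q 0 := by nlinarith
    set p' : Fin n → ℝ := fun j => p j.succ with hp'def
    set q' : Fin n → ℝ := fun j => q j.succ with hq'def
    have hp' : ∀ j, p' j ∈ Set.Ioo (0:ℝ) 1 := fun j => hp j.succ
    have hq' : ∀ j, q' j = 1 - p' j := fun j => hq j.succ
    set Ft : (Fin n → Bool) → ℝ := fun ω' => F (Fin.cons true ω') with hFt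
    set Ff : (Fin n → Bool) → ℝ := fun ω' => F (Fin.cons false ω') with hFf
    set G : (Fin n → Bool) → ℝ := fun ω' => p 0 * Ft ω' + q 0 * Ff ω' with hG
    rw [Efin_cons p q F, Efin_cons p q (fun ω => F ω ^ 2),
        Efin_cons p q (fun ω => ∑ k, (Dfin p q F k ω) ^ 2)]
    -- identify derivatives
    have hD0 : ∀ (b : Bool) (ω' : Fin n → Bool),
        Dfin p q F 0 (Fin.cons b ω') = Real.sqrt (p 0 * q 0) * (Ft ω' - Ff ω') := by
      intro b ω'
      simp [Dfin, Fin.update_cons_zero, hFt, hFf]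
    have hDsucc : ∀ (b : Bool) (j : Fin n) (ω' : Fin n → Bool),
        Dfin p q F j.succ (Fin.cons b ω')
          = Dfin p' q' (fun ω' => F (Fin.cons b ω')) j ω' := by
      intro b j ω'
      simp [Dfin, ← Fin.cons_update, hp'def, hq'def]
    -- split the second-moment term
    have e1 : Efin p' q' (fun ω' => p 0 * F (Fin.cons true ω') ^ 2
          + q 0 * F (Fin.cons false ω') ^ 2)
        = Efin p' q' (fun ω' => G ω' ^ 2)
          + Efin p' q' (fun ω' => p 0 * q 0 * (Ft ω' - Ff ω') ^ 2) := by
      rw [← Efin_add]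
      congr 1
      funext ω'
      simp only [hG, hFt, hFf, h0q]
      ring
    rw [e1]
    have key := ih p' q' hp' hq' G
    -- pointwise bound
    have hpt : ∀ ω', (∑ j, (Dfin p' q' G j ω') ^ 2) + p 0 * q 0 * (Ft ω' - Ff ω') ^ 2
        ≤ p 0 * (∑ k, (Dfin p q F k (Fin.cons true ω')) ^ 2)
          + q 0 * (∑ k, (Dfin p q F k (Fin.cons false ω')) ^ 2) := by
      intro ω'
      rw [Fin.sum_univ_succ, Fin.sum_univ_succ]
      simp only [hD0, hDsucc]
      rw [mul_pow, Real.sq_sqrt hpq0]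
      have hsum : ∑ j, (Dfin p' q' G j ω') ^ 2
          ≤ p 0 * ∑ j, (Dfin p' q' (fun ω'' => F (Fin.cons true ω'')) j ω') ^ 2
            + q 0 * ∑ j, (Dfin p' q' (fun ω'' => F (Fin.cons false ω'')) j ω') ^ 2 := by
      -- each summand
        rw [Finset.mul_sum, Finset.mul_sum, ← Finset.sum_add_distrib]
        refine Finset.sum_le_sum fun j _ => ?_
        have hDG : Dfin p' q' G j ω'
            = p 0 * Dfin p' q' (fun ω'' => F (Fin.cons true ω'')) j ω'
              + q 0 * Dfin p' q' (fun ω'' => F (Fin.cons false ω'')) j ω' := by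
          simp only [Dfin, hG, hFt, hFf]
          ring
        rw [hDG]
        set a := Dfin p' q' (fun ω'' => F (Fin.cons true ω'')) j ω'
        set b := Dfin p' q' (fun ω'' => F (Fin.cons false ω'')) j ω'
        nlinarith [sq_nonneg (a - b), sq_nonneg a, sq_nonneg b]
      rw [h0q] at hsum ⊢
      nlinarith [hsum, sq_nonneg (Ft ω' - Ff ω'), hpq0]
    calc Efin p' q' (fun ω' => G ω' ^ 2)
          + Efin p' q' (fun ω' => p 0 * q 0 * (Ft ω' - Ff ω') ^ 2)
          - Efin p' q' G ^ 2
        ≤ Efin p' q' (fun ω' => ∑ j, (Dfin p' q' G j ω') ^ 2)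
          + Efin p' q' (fun ω' => p 0 * q 0 * (Ft ω' - Ff ω') ^ 2) := by linarith [key]
      _ = Efin p' q' (fun ω' => (∑ j, (Dfin p' q' G j ω') ^ 2)
            + p 0 * q 0 * (Ft ω' - Ff ω') ^ 2) := (Efin_add p' q' _ _).symm
      _ ≤ Efin p' q' (fun ω' => p 0 * (∑ k, (Dfin p q F k (Fin.cons true ω')) ^ 2)
            + q 0 * (∑ k, (Dfin p q F k (Fin.cons false ω')) ^ 2)) :=
          Efin_mono p' q' hp' hq' hpt
end

section
/- Let F = (F_1,…,F_d) be a vector of functions on {-1,1}^ℕ and f : ℝ^d → ℝ be three times partially differentiable with bounded third partial derivatives. Then for every k ∈ ℕ, D_k f(F) = Σ_{i=1}^d (∂f/∂x_i)(F) D_k F_i − (X_k / (4√(p_k q_k))) Σ_{i,j=1}^d [(∂²f/∂x_i∂x_j)(F_k^+) + (∂²f/∂x_i∂x_j)(F_k^−)] (D_k F_i)(D_k F_j) + R_k(F), where the remainder satisfies |R_k(F)| ≤ (5 / (12 p_k q_k)) Σ_{i,j,ℓ=1}^d ‖∂³f/∂x_i∂x_j∂x_ℓ‖_∞ |(D_k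 F_i)(D_k F_j)(D_k F_ℓ)|. (Multivariate chain rule for the discrete gradient.) -/
open Set

/-- Discrete Malliavin derivative `D_k F = √(p_k q_k) (F_k^+ - F_k^-)`. -/
noncomputable def Dop (p q : ℕ → ℝ) (F : (ℕ → ℝ) → ℝ) (k : ℕ) (ω : ℕ → ℝ) : ℝ :=
  Real.sqrt (p k * q k) * (F (Function.update ω k 1) - F (Function.update ω k (-1)))

/-- Second partial derivative `∂²f/∂x_i∂x_j`. -/
noncomputable def pd2 {d : ℕ} (f : (Fin d → ℝ) → ℝ) (i j : Fin d) (x : Fin d → ℝ) : ℝ :=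
  fderiv ℝ (fun y => fderiv ℝ f y (Pi.single i 1)) x (Pi.single j 1)

/-- Third partial derivative `∂³f/∂x_i∂x_j∂x_ℓ`. -/
noncomputable def pd3 {d : ℕ} (f : (Fin d → ℝ) → ℝ) (i j l : Fin d) (x : Fin d → ℝ) : ℝ :=
  fderiv ℝ (fun y => pd2 f i j y) x (Pi.single l 1)

lemma taylor_core (g g1 g2 g3 : ℝ → ℝ) (h1 : ∀ t, HasDerivAt g (g1 t) t)
    (h2 : ∀ t, HasDerivAt g1 (g2 t) t) (h3 : ∀ t, HasDerivAt g2 (g3 t) t)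
    {K : ℝ} (hK : ∀ t, |g3 t| ≤ K) :
    |g 1 - g 0 - g1 0 - g2 0 / 2| ≤ K / 6 := by
  have step1 : ∀ t ∈ Icc (0:ℝ) 1, |g2 t - g2 0| ≤ K * t := by
    intro t ht
    have := convex_univ.norm_image_sub_le_of_norm_hasDerivWithin_le
      (f := g2) (f' := g3) (fun x _ => (h3 x).hasDerivWithinAt)
      (fun x _ => by simpa [Real.norm_eq_abs] using hK x) (Set.mem_univ (0:ℝ)) (Set.mem_univ t)
    simpa [Real.norm_eq_abs, abs_of_nonneg ht.1] using this
  set χ : ℝ → ℝ := fun t => g1 t - g1 0 - g2 0 * t with hχdef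
  have hχ : ∀ t, HasDerivAt χ (g2 t - g2 0) t := by
    intro t
    have h' : HasDerivAt (fun t : ℝ => g2 0 * t) (g2 0) t := by
      simpa using (hasDerivAt_id t).const_mul (g2 0)
    exact ((h2 t).sub_const (g1 0)).sub h'
  have hχc : Continuous χ := by
    have : Differentiable ℝ χ := fun t => (hχ t).differentiableAt
    exact this.continuous
  have step2 : ∀ t ∈ Icc (0:ℝ) 1, |χ t| ≤ K / 2 * t ^ 2 := by
    have hB : ∀ x : ℝ, HasDerivAt (fun t => K / 2 * t ^ 2) (K * x) x := by
      intro x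
      have := (hasDerivAt_pow 2 x).const_mul (K / 2)
      exact this.congr_deriv (by norm_num; ring)
    intro t ht
    have := image_norm_le_of_norm_deriv_right_le_deriv_boundary
      (f := χ) (f' := fun t => g2 t - g2 0) (a := 0) (b := 1)
      hχc.continuousOn (fun x _ => (hχ x).hasDerivWithinAt)
      (B := fun t => K / 2 * t ^ 2) (B' := fun t => K * t)
      (by simp [hχdef]) hB
      (fun x hx => by simpa [Real.norm_eq_abs] using step1 x ⟨hx.1, hx.2.le⟩) ht
    simpa [Real.norm_eq_abs] using this
  set φ : ℝ → ℝ := fun t => g t - g 0 - g1 0 * t - g2 0 / 2 * t ^ 2 with hφdef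
  have hφ : ∀ t, HasDerivAt φ (χ t) t := by
    intro t
    have ha : HasDerivAt (fun t : ℝ => g1 0 * t) (g1 0) t := by
      simpa using (hasDerivAt_id t).const_mul (g1 0)
    have hb : HasDerivAt (fun t : ℝ => g2 0 / 2 * t ^ 2) (g2 0 * t) t := by
      have := (hasDerivAt_pow 2 t).const_mul (g2 0 / 2)
      exact this.congr_deriv (by norm_num; ring)
    have := (((h1 t).sub_const (g 0)).sub ha).sub hb
    exact this
  have hφc : Continuous φ := by
    have : Differentiable ℝ φ := fun t => (hφ t).differentiableAt
    exact this.continuous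
  have step3 : ∀ t ∈ Icc (0:ℝ) 1, |φ t| ≤ K / 6 * t ^ 3 := by
    have hB : ∀ x : ℝ, HasDerivAt (fun t => K / 6 * t ^ 3) (K / 2 * x ^ 2) x := by
      intro x
      have := (hasDerivAt_pow 3 x).const_mul (K / 6)
      exact this.congr_deriv (by norm_num; ring)
    intro t ht
    have := image_norm_le_of_norm_deriv_right_le_deriv_boundary
      (f := φ) (f' := χ) (a := 0) (b := 1)
      hφc.continuousOn (fun x _ => (hφ x).hasDerivWithinAt)
      (B := fun t => K / 6 * t ^ 3) (B' := fun t => K / 2 * t ^ 2)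
      (by simp [hφdef]) hB
      (fun x hx => by simpa [Real.norm_eq_abs] using step2 x ⟨hx.1, hx.2.le⟩) ht
    simpa [Real.norm_eq_abs] using this
  have := step3 1 (by norm_num)
  have hφ1 : φ 1 = g 1 - g 0 - g1 0 - g2 0 / 2 := by simp [hφdef]
  rw [hφ1] at this
  linarith

lemma clm_apply_eq_sum {d : ℕ} (L : (Fin d → ℝ) →L[ℝ] ℝ) (v : Fin d → ℝ) :
    L v = ∑ i, L (Pi.single i 1) * v i := by
  have hv : v = ∑ i, v i • (Pi.single i (1:ℝ) : Fin d → ℝ) := by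
    funext j
    simp [Finset.sum_apply, Pi.single_apply]
  conv_lhs => rw [hv]
  rw [map_sum]
  exact Finset.sum_congr rfl fun i _ => by rw [map_smul]; simp [mul_comm]

lemma line_d1 {d : ℕ} {φ : (Fin d → ℝ) → ℝ} (hφ : Differentiable ℝ φ) (c v : Fin d → ℝ)
    (t : ℝ) :
    HasDerivAt (fun u : ℝ => φ (c + u • v))
      (∑ j, fderiv ℝ φ (c + t • v) (Pi.single j 1) * v j) t := by
  have hγ : HasDerivAt (fun u : ℝ => c + u • v) v t := by
    simpa using ((hasDerivAt_id t).smul_const v).const_add c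
  have := (hφ (c + t • v)).hasFDerivAt.comp_hasDerivAt t hγ
  rw [clm_apply_eq_sum] at this
  exact this

variable {d : ℕ} {f : (Fin d → ℝ) → ℝ}

lemma hD1 (hf : ContDiff ℝ 3 f) (i : Fin d) :
    ContDiff ℝ 2 (fun x => fderiv ℝ f x (Pi.single i 1)) :=
  (ContinuousLinearMap.apply ℝ ℝ (Pi.single i 1 : Fin d → ℝ)).contDiff.comp
    (hf.fderiv_right (by norm_num))

lemma hD2 (hf : ContDiff ℝ 3 f) (i j : Fin d) : ContDiff ℝ 1 (pd2 f i j) :=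
  (ContinuousLinearMap.apply ℝ ℝ (Pi.single j 1 : Fin d → ℝ)).contDiff.comp
    ((hD1 hf i).fderiv_right (by norm_num))

lemma g1_hasDeriv (hf : ContDiff ℝ 3 f) (c v : Fin d → ℝ) (t : ℝ) :
    HasDerivAt (fun u : ℝ => ∑ i, fderiv ℝ f (c + u • v) (Pi.single i 1) * v i)
      (∑ i, (∑ j, pd2 f i j (c + t • v) * v j) * v i) t :=
  HasDerivAt.fun_sum fun i _ =>
    (line_d1 ((hD1 hf i).differentiable (by norm_num)) c v t).mul_const (v i)

lemma g2_hasDeriv (hf : ContDiff ℝ 3 f) (c v : Fin d → ℝ) (t : ℝ) :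
    HasDerivAt (fun u : ℝ => ∑ i, (∑ j, pd2 f i j (c + u • v) * v j) * v i)
      (∑ i, (∑ j, (∑ l, pd3 f i j l (c + t • v) * v l) * v j) * v i) t :=
  HasDerivAt.fun_sum fun i _ =>
    (HasDerivAt.fun_sum fun j _ =>
      (line_d1 ((hD2 hf i j).differentiable (by norm_num)) c v t).mul_const (v j)).mul_const (v i)

lemma g0_hasDeriv (hf : ContDiff ℝ 3 f) (c v : Fin d → ℝ) (t : ℝ) :
    HasDerivAt (fun u : ℝ => f (c + u • v))
      (∑ i, fderiv ℝ f (c + t • v) (Pi.single i 1) * v i) t :=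
  line_d1 (hf.differentiable (by norm_num)) c v t

lemma g3_bound (M : Fin d → Fin d → Fin d → ℝ)
    (hM : ∀ i j l (x : Fin d → ℝ), |pd3 f i j l x| ≤ M i j l) (v x : Fin d → ℝ) :
    |∑ i, (∑ j, (∑ l, pd3 f i j l x * v l) * v j) * v i|
      ≤ ∑ i, ∑ j, ∑ l, M i j l * |v i * v j * v l| := by
  refine le_trans (Finset.abs_sum_le_sum_abs _ _) (Finset.sum_le_sum fun i _ => ?_)
  rw [abs_mul]
  refine le_trans (mul_le_mul_of_nonneg_right (Finset.abs_sum_le_sum_abs _ _)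
    (abs_nonneg _)) ?_
  rw [Finset.sum_mul]
  refine Finset.sum_le_sum fun j _ => ?_
  rw [abs_mul]
  have h1 : |∑ l, pd3 f i j l x * v l| ≤ ∑ l, M i j l * |v l| :=
    le_trans (Finset.abs_sum_le_sum_abs _ _) (Finset.sum_le_sum fun l _ => by
      rw [abs_mul]; exact mul_le_mul_of_nonneg_right (hM i j l x) (abs_nonneg _))
  refine le_trans (mul_le_mul_of_nonneg_right
    (mul_le_mul_of_nonneg_right h1 (abs_nonneg _)) (abs_nonneg _)) ?_
  rw [Finset.sum_mul, Finset.sum_mul]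
  exact Finset.sum_le_sum fun l _ => le_of_eq (by rw [abs_mul, abs_mul]; ring)

lemma main_taylor (hf : ContDiff ℝ 3 f) (M : Fin d → Fin d → Fin d → ℝ)
    (hM : ∀ i j l (x : Fin d → ℝ), |pd3 f i j l x| ≤ M i j l) (c v : Fin d → ℝ) :
    |f (c + v) - f c - ∑ i, fderiv ℝ f c (Pi.single i 1) * v i
        - (∑ i, (∑ j, pd2 f i j c * v j) * v i) / 2|
      ≤ (∑ i, ∑ j, ∑ l, M i j l * |v i * v j * v l|) / 6 := by
  have key := taylor_core (fun u : ℝ => f (c + u • v))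
    (fun u => ∑ i, fderiv ℝ f (c + u • v) (Pi.single i 1) * v i)
    (fun u => ∑ i, (∑ j, pd2 f i j (c + u • v) * v j) * v i)
    (fun u => ∑ i, (∑ j, (∑ l, pd3 f i j l (c + u • v) * v l) * v j) * v i)
    (g0_hasDeriv hf c v) (g1_hasDeriv hf c v) (g2_hasDeriv hf c v)
    (fun t => g3_bound M hM v (c + t • v))
  simpa using key

lemma pd2_diff (hf : ContDiff ℝ 3 f) (M : Fin d → Fin d → Fin d → ℝ)
    (hM : ∀ i j l (x : Fin d → ℝ), |pd3 f i j l x| ≤ M i j l) (c v : Fin d → ℝ) :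
    |(∑ i, (∑ j, pd2 f i j (c + v) * v j) * v i)
        - ∑ i, (∑ j, pd2 f i j c * v j) * v i|
      ≤ ∑ i, ∑ j, ∑ l, M i j l * |v i * v j * v l| := by
  have := convex_univ.norm_image_sub_le_of_norm_hasDerivWithin_le
    (f := fun u : ℝ => ∑ i, (∑ j, pd2 f i j (c + u • v) * v j) * v i)
    (f' := fun u => ∑ i, (∑ j, (∑ l, pd3 f i j l (c + u • v) * v l) * v j) * v i)
    (fun x _ => (g2_hasDeriv hf c v x).hasDerivWithinAt)
    (fun x _ => by
      simpa [Real.norm_eq_abs] using g3_bound M hM v (c + x • v))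
    (Set.mem_univ (0:ℝ)) (Set.mem_univ (1:ℝ))
  simpa [Real.norm_eq_abs] using this

lemma abs_sub_le'' (a b : ℝ) : |a - b| ≤ |a| + |b| := by
  calc |a - b| = |a + -b| := by rw [sub_eq_add_neg]
    _ ≤ |a| + |-b| := abs_add_le _ _
    _ = |a| + |b| := by rw [abs_neg]

/-- Multivariate chain rule for the discrete gradient, with remainder bound. -/
theorem stmt4 {d : ℕ} (p q : ℕ → ℝ) (hp : ∀ k, p k ∈ Set.Ioo (0 : ℝ) 1)
    (hq : ∀ k, q k = 1 - p k)
    (F : Fin d → (ℕ → ℝ) → ℝ) (f : (Fin d → ℝ) → ℝ) (hf : ContDiff ℝ 3 f)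
    (M : Fin d → Fin d → Fin d → ℝ)
    (hM : ∀ i j l (x : Fin d → ℝ), |pd3 f i j l x| ≤ M i j l)
    (k : ℕ) (ω : ℕ → ℝ) (hω : ω k = 1 ∨ ω k = -1) :
    ∃ R : ℝ,
      Dop p q (fun x => f (fun i => F i x)) k ω
        = (∑ i, fderiv ℝ f (fun i' => F i' ω) (Pi.single i 1) * Dop p q (F i) k ω)
          - (ω k / (4 * Real.sqrt (p k * q k))) *
              ∑ i, ∑ j,
                (pd2 f i j (fun i' => F i' (Function.update ω k 1))
                  + pd2 f i j (fun i' => F i' (Function.update ω k (-1))))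
                * (Dop p q (F i) k ω) * (Dop p q (F j) k ω)
          + R
      ∧ |R| ≤ 5 / (12 * (p k * q k)) *
          ∑ i, ∑ j, ∑ l,
            M i j l * |Dop p q (F i) k ω * Dop p q (F j) k ω * Dop p q (F l) k ω| := by
  obtain ⟨hp0, hp1⟩ := hp k
  have hq0 : 0 < q k := by rw [hq]; linarith
  have hpq : 0 < p k * q k := mul_pos hp0 hq0
  set s := Real.sqrt (p k * q k) with hs_def
  have hs : 0 < s := Real.sqrt_pos.mpr hpq
  have hs0 : s ≠ 0 := ne_of_gt hs
  have hs2 : s ^ 2 = p k * q k := Real.sq_sqrt hpq.le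
  set A : Fin d → ℝ := fun i => F i (Function.update ω k 1) with hA
  set B : Fin d → ℝ := fun i => F i (Function.update ω k (-1)) with hB
  set v : Fin d → ℝ := fun i => A i - B i with hv
  have hDop : ∀ i, Dop p q (F i) k ω = s * v i := fun i => rfl
  have hDf : Dop p q (fun x => f (fun i => F i x)) k ω = s * (f A - f B) := rfl
  set K := ∑ i, ∑ j, ∑ l, M i j l * |v i * v j * v l| with hK
  set P_A := ∑ i, (∑ j, pd2 f i j A * v j) * v i with hPA
  set P_B := ∑ i, (∑ j, pd2 f i j B * v j) * v i with hPB
  have hQ : (∑ i, ∑ j, (pd2 f i j A + pd2 f i j B) * v i * v j) = P_A + P_B := by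
    rw [hPA, hPB, ← Finset.sum_add_distrib]
    refine Finset.sum_congr rfl fun i _ => ?_
    rw [Finset.sum_mul, Finset.sum_mul, ← Finset.sum_add_distrib]
    exact Finset.sum_congr rfl fun j _ => by ring
  have hSgen : ∀ c : Fin d → ℝ,
      (∑ i, fderiv ℝ f c (Pi.single i 1) * Dop p q (F i) k ω)
        = s * ∑ i, fderiv ℝ f c (Pi.single i 1) * v i := by
    intro c
    rw [Finset.mul_sum]
    exact Finset.sum_congr rfl fun i _ => by rw [hDop i]; ring
  have hQ2 : (∑ i, ∑ j, (pd2 f i j A + pd2 f i j B)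
        * Dop p q (F i) k ω * Dop p q (F j) k ω) = s ^ 2 * (P_A + P_B) := by
    have h' : (∑ i, ∑ j, (pd2 f i j A + pd2 f i j B)
        * Dop p q (F i) k ω * Dop p q (F j) k ω)
        = s ^ 2 * ∑ i, ∑ j, (pd2 f i j A + pd2 f i j B) * v i * v j := by
      rw [Finset.mul_sum]
      refine Finset.sum_congr rfl fun i _ => ?_
      rw [Finset.mul_sum]
      exact Finset.sum_congr rfl fun j _ => by rw [hDop i, hDop j]; ring
    rw [h', hQ]
  have hsum : (∑ i, ∑ j, ∑ l, M i j l *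
        |Dop p q (F i) k ω * Dop p q (F j) k ω * Dop p q (F l) k ω|) = s ^ 3 * K := by
    rw [hK, Finset.mul_sum]
    refine Finset.sum_congr rfl fun i _ => ?_
    rw [Finset.mul_sum]
    refine Finset.sum_congr rfl fun j _ => ?_
    rw [Finset.mul_sum]
    refine Finset.sum_congr rfl fun l _ => ?_
    rw [hDop i, hDop j, hDop l,
      show s * v i * (s * v j) * (s * v l) = s ^ 3 * (v i * v j * v l) from by ring,
      abs_mul, abs_of_pos (pow_pos hs 3)]
    ring
  have hRHS : 5 / (12 * (p k * q k)) * (∑ i, ∑ j, ∑ l, M i j l *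
        |Dop p q (F i) k ω * Dop p q (F j) k ω * Dop p q (F l) k ω|)
      = s * (5 / 12 * K) := by
    rw [hsum, ← hs2]
    field_simp
  rcases hω with h1 | h1
  · -- ω k = 1, the base point is A
    have hupd : Function.update ω k 1 = ω := by
      rw [← h1]; exact Function.update_eq_self k ω
    have hXA : (fun i' => F i' ω) = A := by rw [← hupd]
    have hAv : A + -v = B := by
      funext i; simp only [Pi.add_apply, Pi.neg_apply, hv]; ring
    have T2 := main_taylor hf M hM A (-v)
    have Dd := pd2_diff hf M hM A (-v)
    rw [hAv] at T2 Dd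
    have e1 : (∑ i, fderiv ℝ f A (Pi.single i 1) * (-v) i)
        = -(∑ i, fderiv ℝ f A (Pi.single i 1) * v i) := by
      simp [mul_neg, Finset.sum_neg_distrib]
    have e2 : ∀ c : Fin d → ℝ, (∑ i, (∑ j, pd2 f i j c * (-v) j) * (-v) i)
        = ∑ i, (∑ j, pd2 f i j c * v j) * v i := by
      intro c
      refine Finset.sum_congr rfl fun i _ => ?_
      rw [show (∑ j, pd2 f i j c * (-v) j) = -(∑ j, pd2 f i j c * v j) from by
        simp [mul_neg, Finset.sum_neg_distrib], Pi.neg_apply, neg_mul_neg]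
    have e3 : (∑ i, ∑ j, ∑ l, M i j l * |(-v) i * (-v) j * (-v) l|) = K := by
      rw [hK]
      refine Finset.sum_congr rfl fun i _ => Finset.sum_congr rfl fun j _ =>
        Finset.sum_congr rfl fun l _ => ?_
      rw [Pi.neg_apply, Pi.neg_apply, Pi.neg_apply,
        show -v i * -v j * -v l = -(v i * v j * v l) from by ring, abs_neg]
    rw [e1, e2, e3, ← hPA] at T2
    rw [e2, e2, e3, ← hPA, ← hPB] at Dd
    have Dd' : |P_A - P_B| ≤ K := by rw [abs_sub_comm]; exact Dd
    refine ⟨s * ((f A - f B) - (∑ i, fderiv ℝ f A (Pi.single i 1) * v i)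
      + (ω k / 4) * (P_A + P_B)), ?_, ?_⟩
    · rw [hDf, hXA, hSgen A, hQ2]
      field_simp
      ring
    · have hT : |(f A - f B) - (∑ i, fderiv ℝ f A (Pi.single i 1) * v i)
          + (ω k / 4) * (P_A + P_B)| ≤ 5 / 12 * K := by
        have key : (f A - f B) - (∑ i, fderiv ℝ f A (Pi.single i 1) * v i)
            + (ω k / 4) * (P_A + P_B)
            = -((f B - f A - -(∑ i, fderiv ℝ f A (Pi.single i 1) * v i) - P_A / 2)
                + (P_A - P_B) / 4) := by
          rw [h1]; ring
        rw [key, abs_neg]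
        have h4 : |(P_A - P_B) / 4| = |P_A - P_B| / 4 := by
          rw [abs_div]; norm_num
        refine le_trans (abs_add_le _ _) ?_
        rw [h4]
        linarith [T2, Dd']
      rw [hRHS, abs_mul, abs_of_pos hs]
      exact mul_le_mul_of_nonneg_left hT hs.le
  · -- ω k = -1, the base point is B
    have hupd : Function.update ω k (-1) = ω := by
      rw [← h1]; exact Function.update_eq_self k ω
    have hXB : (fun i' => F i' ω) = B := by rw [← hupd]
    have hBv : B + v = A := by
      funext i; simp only [Pi.add_apply, hv]; ring
    have T1 := main_taylor hf M hM B v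
    have Dd := pd2_diff hf M hM B v
    rw [hBv] at T1 Dd
    rw [← hPB, ← hK] at T1
    rw [← hPA, ← hPB, ← hK] at Dd
    refine ⟨s * ((f A - f B) - (∑ i, fderiv ℝ f B (Pi.single i 1) * v i)
      + (ω k / 4) * (P_A + P_B)), ?_, ?_⟩
    · rw [hDf, hXB, hSgen B, hQ2]
      field_simp
      ring
    · have hT : |(f A - f B) - (∑ i, fderiv ℝ f B (Pi.single i 1) * v i)
          + (ω k / 4) * (P_A + P_B)| ≤ 5 / 12 * K := by
        have key : (f A - f B) - (∑ i, fderiv ℝ f B (Pi.single i 1) * v i)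
            + (ω k / 4) * (P_A + P_B)
            = (f A - f B - (∑ i, fderiv ℝ f B (Pi.single i 1) * v i) - P_B / 2)
              - (P_A - P_B) / 4 := by
          rw [h1]; ring
        rw [key]
        have h4 : |(P_A - P_B) / 4| = |P_A - P_B| / 4 := by
          rw [abs_div]; norm_num
        refine le_trans (abs_sub_le'' _ _) ?_
        rw [h4]
        linarith [T1, Dd]
      rw [hRHS, abs_mul, abs_of_pos hs]
      exact mul_le_mul_of_nonneg_left hT hs.le
end

section
/- Let V_i and V_j be the numbers of vertices of degree i and j respectively in the Erdős–Rényi random graph G(n, p) with p = θ/(n−1) for θ ∈ (0,1). Then cov(V_i, V_j) = (1/n) E[V_i] E[V_j] ( (i−θ)(j−θ) / (θ(1 − θ/(n−1))) − 1 ) + 1{i=j} E[V_i]. -/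
open Finset

/-- Expectation with respect to the Erdős–Rényi random graph `G(n,p)`. -/
noncomputable def Egraph (n : ℕ) (p : ℝ) (F : (Sym2 (Fin n) → Bool) → ℝ) : ℝ :=
  ∑ σ : Sym2 (Fin n) → Bool, (∏ e : Sym2 (Fin n), if σ e then p else 1 - p) * F σ

/-- Degree of the vertex `k`. -/
def degOf {n : ℕ} (σ : Sym2 (Fin n) → Bool) (k : Fin n) : ℕ :=
  (Finset.univ.filter (fun l : Fin n => l ≠ k ∧ σ s(k, l) = true)).card

/-- `V_i`: number of vertices of degree `i`. -/
noncomputable def Vdeg (n i : ℕ) (σ : Sym2 (Fin n) → Bool) : ℝ :=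
  ∑ k : Fin n, if degOf σ k = i then (1 : ℝ) else 0

noncomputable def W (p : ℝ) (b : Bool) : ℝ := if b then p else 1 - p

lemma prodW_sum (p : ℝ) (T : Type) [Fintype T] [DecidableEq T] :
    ∑ τ : T → Bool, ∏ t, W p (τ t) = 1 := by
  have h := Finset.prod_univ_sum (fun _ : T => (univ : Finset Bool)) (fun t b => W p b)
  rw [Fintype.piFinset_univ] at h
  rw [← h]
  simp [W]

lemma pullback (p : ℝ) {A E : Type} [Fintype A] [Fintype E] [DecidableEq A] [DecidableEq E]
    (ι : A ↪ E) (g : (A → Bool) → ℝ) :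
    ∑ σ : E → Bool, (∏ e, W p (σ e)) * g (σ ∘ ι) =
      ∑ τ : A → Bool, (∏ a, W p (τ a)) * g τ := by
  classical
  set C := {e : E // e ∉ Set.range ι}
  let e₂ : A ≃ Set.range ι := Equiv.ofInjective ι ι.injective
  let ε : A ⊕ C ≃ E := (Equiv.sumCongr e₂ (Equiv.refl C)).trans
    (Equiv.sumCompl (fun e => e ∈ Set.range ι))
  have hεl : ∀ a : A, ε (Sum.inl a) = ι a := fun a => rfl
  have key : ∀ ρ : (A ⊕ C) → Bool,
      (∏ e, W p (ρ (ε.symm e))) * g ((fun e => ρ (ε.symm e)) ∘ ι)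
        = ((∏ a, W p (ρ (Sum.inl a))) * ∏ c, W p (ρ (Sum.inr c))) *
            g (fun a => ρ (Sum.inl a)) := by
    intro ρ
    have h1 : (∏ e, W p (ρ (ε.symm e))) = ∏ x : A ⊕ C, W p (ρ x) := by
      rw [← Equiv.prod_comp ε (fun x => W p (ρ (ε.symm x)))]
      simp
    have h2 : ((fun e => ρ (ε.symm e)) ∘ ι) = fun a => ρ (Sum.inl a) := by
      funext a
      simp [Function.comp, ← hεl a]
    rw [h1, h2, Fintype.prod_sum_type]
  calc ∑ σ : E → Bool, (∏ e, W p (σ e)) * g (σ ∘ ι)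
      = ∑ ρ : (A ⊕ C) → Bool, (∏ e, W p (ρ (ε.symm e))) * g ((fun e => ρ (ε.symm e)) ∘ ι) := by
        rw [← (Equiv.arrowCongr ε (Equiv.refl Bool)).sum_comp
          (fun σ : E → Bool => (∏ e, W p (σ e)) * g (σ ∘ ι))]
        apply Fintype.sum_congr
        intro ρ
        rfl
    _ = ∑ ρ : (A ⊕ C) → Bool, ((∏ a, W p (ρ (Sum.inl a))) * ∏ c, W p (ρ (Sum.inr c))) *
            g (fun a => ρ (Sum.inl a)) := by
        exact Fintype.sum_congr _ _ key
    _ = ∑ x : (A → Bool) × (C → Bool), ((∏ a, W p (x.1 a)) * ∏ c, W p (x.2 c)) * g x.1 := by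
        exact Fintype.sum_equiv (Equiv.sumArrowEquivProdArrow A C Bool) _ _
          (fun ρ => by simp [Equiv.sumArrowEquivProdArrow]; exact Or.inl rfl)
    _ = ∑ τ : A → Bool, (∏ a, W p (τ a)) * g τ := by
        rw [Fintype.sum_prod_type]
        refine Fintype.sum_congr _ _ (fun τ => ?_)
        calc ∑ κ : C → Bool, ((∏ a, W p (τ a)) * ∏ c, W p (κ c)) * g τ
            = ((∏ a, W p (τ a)) * g τ) * ∑ κ : C → Bool, ∏ c, W p (κ c) := by
              rw [Finset.mul_sum]; exact Fintype.sum_congr _ _ (fun κ => by ring)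
          _ = (∏ a, W p (τ a)) * g τ := by rw [prodW_sum, mul_one]

def finsetBoolEquiv {A : Type} [Fintype A] [DecidableEq A] : Finset A ≃ (A → Bool) where
  toFun s := fun a => a ∈ s
  invFun τ := univ.filter (fun a => τ a = true)
  left_inv s := by ext a; simp
  right_inv τ := by funext a; simp

lemma binom (p : ℝ) {A : Type} [Fintype A] [DecidableEq A] (i : ℕ) :
    ∑ τ : A → Bool, (∏ a, W p (τ a)) *
      (if (univ.filter (fun a => τ a = true)).card = i then (1:ℝ) else 0)
    = (Fintype.card A).choose i * p ^ i * (1 - p) ^ (Fintype.card A - i) := by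
  rw [← Fintype.sum_equiv (finsetBoolEquiv (A := A))
    (fun s : Finset A => (∏ a, W p (a ∈ s)) *
      (if s.card = i then (1:ℝ) else 0)) _ (fun s => by
        simp only [finsetBoolEquiv, Equiv.coe_fn_mk]
        congr 1
        simp)]
  have hprod : ∀ s : Finset A, (∏ a, W p (a ∈ s)) = p ^ s.card * (1 - p) ^ (Fintype.card A - s.card) := by
    intro s
    have : (∏ a, W p (a ∈ s)) = ∏ a ∈ univ, (if a ∈ s then p else 1 - p) := by
      apply Finset.prod_congr rfl
      intro a _
      by_cases h : a ∈ s <;> simp [W, h]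
    rw [this, Finset.prod_ite, Finset.prod_const, Finset.prod_const, Finset.filter_univ_mem,
      Finset.filter_not, Finset.filter_univ_mem, Finset.card_sdiff_of_subset (subset_univ s),
      Finset.card_univ]
  calc ∑ s : Finset A, (∏ a, W p (a ∈ s)) * (if s.card = i then (1:ℝ) else 0)
      = ∑ s ∈ univ.filter (fun s : Finset A => s.card = i),
          p ^ s.card * (1 - p) ^ (Fintype.card A - s.card) := by
        rw [Finset.sum_filter]
        apply Finset.sum_congr rfl
        intro s _
        rw [hprod s]
        by_cases h : s.card = i <;> simp [h]
    _ = (Fintype.card A).choose i * p ^ i * (1 - p) ^ (Fintype.card A - i) := by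
        have : univ.filter (fun s : Finset A => s.card = i) = Finset.powersetCard i univ := by
          rw [Finset.powersetCard_eq_filter, Finset.powerset_univ]
        rw [this]
        rw [Finset.sum_congr rfl (fun s hs =>
          show p ^ s.card * (1 - p) ^ (Fintype.card A - s.card)
            = p ^ i * (1 - p) ^ (Fintype.card A - i) from by
              rw [(Finset.mem_powersetCard.mp hs).2])]
        rw [Finset.sum_const, Finset.card_powersetCard, Finset.card_univ, nsmul_eq_mul]
        ring

set_option maxHeartbeats 1000000 in
lemma single_vertex (n : ℕ) (p : ℝ) (i : ℕ) (k : Fin n) :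
    ∑ σ : Sym2 (Fin n) → Bool, (∏ e, W p (σ e)) * (if degOf σ k = i then (1:ℝ) else 0)
    = (n - 1).choose i * p ^ i * (1 - p) ^ (n - 1 - i) := by
  classical
  have hinj : Function.Injective (fun l : {l : Fin n // l ≠ k} => s(k, l.1)) := by
    intro l₁ l₂ h
    simp only [Sym2.eq_iff] at h
    rcases h with ⟨-, h⟩ | ⟨h, -⟩
    · exact Subtype.ext h
    · exact absurd h.symm l₂.2
  have hdeg : ∀ σ : Sym2 (Fin n) → Bool, degOf σ k =
      (univ.filter (fun a : {l : Fin n // l ≠ k} => σ s(k, a.1) = true)).card := by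
    intro σ
    unfold degOf
    refine (Finset.card_bij (fun a _ => a.1) ?_ ?_ ?_).symm
    · intro a ha
      simp only [Finset.mem_filter, Finset.mem_univ, true_and] at ha ⊢
      exact ⟨a.2, ha⟩
    · intro a _ b _ h
      exact Subtype.ext h
    · intro l hl
      simp only [Finset.mem_filter, Finset.mem_univ, true_and] at hl
      exact ⟨⟨l, hl.1⟩, by simp [hl.2]⟩
  have hcard : Fintype.card {l : Fin n // l ≠ k} = n - 1 := by
    rw [Fintype.card_subtype_compl, Fintype.card_subtype_eq, Fintype.card_fin]
  let ι : {l : Fin n // l ≠ k} ↪ Sym2 (Fin n) := ⟨fun l => s(k, l.1), hinj⟩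
  calc ∑ σ : Sym2 (Fin n) → Bool, (∏ e, W p (σ e)) * (if degOf σ k = i then (1:ℝ) else 0)
      = ∑ σ : Sym2 (Fin n) → Bool, (∏ e, W p (σ e)) *
          ((fun τ : {l : Fin n // l ≠ k} → Bool =>
            if (univ.filter (fun a => τ a = true)).card = i then (1:ℝ) else 0)
            (σ ∘ ⇑ι)) := by
        refine Fintype.sum_congr _ _ (fun σ => ?_)
        rw [hdeg σ]
        rfl
    _ = ∑ τ : {l : Fin n // l ≠ k} → Bool, (∏ a, W p (τ a)) *
          (if (univ.filter (fun a => τ a = true)).card = i then (1:ℝ) else 0) :=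
        pullback p ι (fun τ => if (univ.filter (fun a => τ a = true)).card = i then (1:ℝ) else 0)
    _ = (n - 1).choose i * p ^ i * (1 - p) ^ (n - 1 - i) := by
        rw [binom, hcard]

lemma card_subtype_filter {α : Type} [Fintype α] (P : α → Prop) [DecidablePred P]
    (Q : α → Prop) [DecidablePred Q] :
    (univ.filter fun a : {x // P x} => Q a.1).card = (univ.filter fun x => P x ∧ Q x).card := by
  refine Finset.card_bij (fun a _ => a.1) ?_ ?_ ?_
  · intro a ha
    simp only [Finset.mem_filter, Finset.mem_univ, true_and] at ha ⊢
    exact ⟨a.2, ha⟩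
  · intro a _ b _ h
    exact Subtype.ext h
  · intro x hx
    simp only [Finset.mem_filter, Finset.mem_univ, true_and] at hx
    exact ⟨⟨x, hx.1⟩, by simp [hx.2]⟩

lemma deg_split {n : ℕ} (σ : Sym2 (Fin n) → Bool) (k l : Fin n) (hkl : l ≠ k) :
    degOf σ k = (univ.filter fun a : {m : Fin n // m ≠ k ∧ m ≠ l} => σ s(k, a.1) = true).card
      + (if σ s(k, l) then 1 else 0) := by
  classical
  unfold degOf
  rw [← Finset.card_filter_add_card_filter_not
    (s := univ.filter (fun m : Fin n => m ≠ k ∧ σ s(k, m) = true)) (p := fun m => m ≠ l)]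
  congr 1
  · rw [Finset.filter_filter, card_subtype_filter (fun m : Fin n => m ≠ k ∧ m ≠ l)
      (fun m => σ s(k, m) = true)]
    apply Finset.card_nbij id
    · intro m hm
      simp only [Finset.mem_coe, Finset.mem_filter, Finset.mem_univ, true_and] at hm ⊢
      tauto
    · exact Set.injOn_id _
    · intro m hm
      simp only [Set.mem_image, Finset.mem_coe, Finset.mem_filter, Finset.mem_univ,
        true_and] at hm ⊢
      exact ⟨m, by tauto, rfl⟩
  · rw [Finset.filter_filter]
    by_cases h : σ s(k, l) = true
    · have : (univ.filter fun m : Fin n => (m ≠ k ∧ σ s(k, m) = true) ∧ ¬m ≠ l) = {l} := by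
        ext m
        simp only [Finset.mem_filter, Finset.mem_univ, true_and, not_not, Finset.mem_singleton]
        constructor
        · tauto
        · rintro rfl
          exact ⟨⟨hkl, h⟩, rfl⟩
      rw [this, h]
      simp
    · have : (univ.filter fun m : Fin n => (m ≠ k ∧ σ s(k, m) = true) ∧ ¬m ≠ l) = ∅ := by
        ext m
        simp only [Finset.mem_filter, Finset.mem_univ, true_and, not_not,
          Finset.notMem_empty, iff_false]
        rintro ⟨⟨-, hσ⟩, rfl⟩
        exact h hσ
      rw [this]
      simp [h]

lemma binom_shift (p : ℝ) {A : Type} [Fintype A] [DecidableEq A] (i : ℕ) :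
    ∑ τ : A → Bool, (∏ a, W p (τ a)) *
      (if (univ.filter (fun a => τ a = true)).card + 1 = i then (1:ℝ) else 0)
    = if i = 0 then 0 else
        (Fintype.card A).choose (i-1) * p ^ (i-1) * (1 - p) ^ (Fintype.card A - (i-1)) := by
  cases i with
  | zero => simp
  | succ i' =>
    simp only [Nat.add_one_inj, Nat.succ_ne_zero, if_false, Nat.add_sub_cancel]
    exact binom p i'

lemma sum_triple {X Y : Type} [Fintype X] [Fintype Y]
    (f1 : X → ℝ) (f2 : Y → ℝ) (g1 : Bool → X → ℝ) (g2 : Bool → Y → ℝ) (u : Bool → ℝ) :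
    ∑ z : Bool × X × Y, (u z.1 * f1 z.2.1 * f2 z.2.2) * (g1 z.1 z.2.1 * g2 z.1 z.2.2)
      = ∑ b : Bool, u b * (∑ x, f1 x * g1 b x) * (∑ y, f2 y * g2 b y) := by
  rw [Fintype.sum_prod_type]
  refine Fintype.sum_congr _ _ fun b => ?_
  rw [Fintype.sum_prod_type]
  calc ∑ x, ∑ y, (u b * f1 x * f2 y) * (g1 b x * g2 b y)
      = ∑ x, (u b * (f1 x * g1 b x)) * ∑ y, f2 y * g2 b y := by
        refine Fintype.sum_congr _ _ fun x => ?_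
        rw [Finset.mul_sum]
        exact Fintype.sum_congr _ _ fun y => by ring
    _ = u b * (∑ x, f1 x * g1 b x) * ∑ y, f2 y * g2 b y := by
        rw [← Finset.sum_mul, ← Finset.mul_sum]

def triEquiv (X Y : Type) : (Bool × (X → Bool) × (Y → Bool)) ≃ ((Unit ⊕ X ⊕ Y) → Bool) where
  toFun z := Sum.elim (fun _ => z.1) (Sum.elim z.2.1 z.2.2)
  invFun τ := (τ (Sum.inl ()), fun x => τ (Sum.inr (Sum.inl x)), fun y => τ (Sum.inr (Sum.inr y)))
  left_inv z := rfl
  right_inv τ := by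
    funext x
    rcases x with _ | (x | y) <;> rfl

lemma card_ne_two {n : ℕ} (k l : Fin n) (h : k ≠ l) :
    Fintype.card {m : Fin n // m ≠ k ∧ m ≠ l} = n - 2 := by
  rw [Fintype.card_subtype]
  have : (univ.filter fun m : Fin n => m ≠ k ∧ m ≠ l) = univ \ {k, l} := by
    ext m
    simp [not_or]
  rw [this, Finset.card_sdiff_of_subset (Finset.subset_univ _), Finset.card_univ, Fintype.card_fin,
    Finset.card_pair h]

noncomputable def Fb (n : ℕ) (p : ℝ) (i : ℕ) : ℝ :=
  (n - 2).choose i * p ^ i * (1 - p) ^ (n - 2 - i)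

noncomputable def Tb (n : ℕ) (p : ℝ) (i : ℕ) : ℝ :=
  if i = 0 then 0 else (n - 2).choose (i - 1) * p ^ (i - 1) * (1 - p) ^ (n - 2 - (i - 1))

noncomputable def G1fun (p : ℝ) {X : Type} [Fintype X] [DecidableEq X] (i : ℕ) (b : Bool)
    (τ : X → Bool) : ℝ :=
  if (univ.filter fun a => τ a = true).card + (if b then 1 else 0) = i then 1 else 0

noncomputable def gPair (p : ℝ) {X Y : Type} [Fintype X] [DecidableEq X] [Fintype Y]
    [DecidableEq Y] (i j : ℕ) (τ : (Unit ⊕ X ⊕ Y) → Bool) : ℝ :=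
  G1fun p i (τ (Sum.inl ())) (fun a => τ (Sum.inr (Sum.inl a))) *
  G1fun p j (τ (Sum.inl ())) (fun a => τ (Sum.inr (Sum.inr a)))

lemma sum_G1 (p : ℝ) {X : Type} [Fintype X] [DecidableEq X] (i : ℕ) (b : Bool) :
    ∑ τ : X → Bool, (∏ a, W p (τ a)) * G1fun p i b τ
    = if b then (if i = 0 then 0 else
        (Fintype.card X).choose (i-1) * p ^ (i-1) * (1-p) ^ (Fintype.card X - (i-1)))
      else (Fintype.card X).choose i * p ^ i * (1-p) ^ (Fintype.card X - i) := by
  cases b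
  · simp only [G1fun, if_false, Nat.add_zero, Bool.false_eq_true]
    exact binom p i
  · simp only [G1fun, if_true]
    exact binom_shift p i

lemma sum_gPair (p : ℝ) {X Y : Type} [Fintype X] [DecidableEq X] [Fintype Y] [DecidableEq Y]
    (i j : ℕ) :
    ∑ τ : (Unit ⊕ X ⊕ Y) → Bool, (∏ x, W p (τ x)) * gPair p i j τ
    = ∑ b : Bool, W p b * (∑ τ : X → Bool, (∏ a, W p (τ a)) * G1fun p i b τ)
        * (∑ τ : Y → Bool, (∏ a, W p (τ a)) * G1fun p j b τ) := by
  have hprod : ∀ z : Bool × (X → Bool) × (Y → Bool),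
      (∏ x : Unit ⊕ X ⊕ Y, W p ((triEquiv X Y) z x))
        = W p z.1 * (∏ a, W p (z.2.1 a)) * (∏ a, W p (z.2.2 a)) := by
    intro z
    rw [Fintype.prod_sum_type, Fintype.prod_sum_type, Fintype.prod_unique, mul_assoc]
    rfl
  have step := Fintype.sum_equiv (triEquiv X Y)
    (fun z : Bool × (X → Bool) × (Y → Bool) =>
      (W p z.1 * (∏ a, W p (z.2.1 a)) * (∏ a, W p (z.2.2 a))) *
        (G1fun p i z.1 z.2.1 * G1fun p j z.1 z.2.2))
    (fun τ : (Unit ⊕ X ⊕ Y) → Bool => (∏ x, W p (τ x)) * gPair p i j τ)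
    (fun z => show ((W p z.1 * ∏ a, W p (z.2.1 a)) * ∏ a, W p (z.2.2 a)) *
        (G1fun p i z.1 z.2.1 * G1fun p j z.1 z.2.2)
      = (∏ x : Unit ⊕ X ⊕ Y, W p ((triEquiv X Y) z x)) * gPair p i j ((triEquiv X Y) z) from by
        rw [hprod z]; rfl)
  rw [← step]
  exact sum_triple (fun τ1 : X → Bool => ∏ a, W p (τ1 a)) (fun τ2 : Y → Bool => ∏ a, W p (τ2 a))
    (G1fun p i) (G1fun p j) (W p)

lemma pair_vertex (n : ℕ) (p : ℝ) (i j : ℕ) (k l : Fin n) (hkl : k ≠ l) :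
    ∑ σ : Sym2 (Fin n) → Bool, (∏ e, W p (σ e)) *
      ((if degOf σ k = i then (1:ℝ) else 0) * (if degOf σ l = j then (1:ℝ) else 0))
    = p * Tb n p i * Tb n p j + (1 - p) * Fb n p i * Fb n p j := by
  classical
  have hinj : Function.Injective
      (Sum.elim (fun _ : Unit => s(k,l))
        (Sum.elim (fun m : {m : Fin n // m ≠ k ∧ m ≠ l} => s(k, m.1))
          (fun m : {m : Fin n // m ≠ l ∧ m ≠ k} => s(l, m.1)))) := by
    rintro (⟨⟩ | (⟨a, ha1, ha2⟩ | ⟨a, ha1, ha2⟩)) (⟨⟩ | (⟨b, hb1, hb2⟩ | ⟨b, hb1, hb2⟩)) h <;>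
      simp only [Sum.elim_inl, Sum.elim_inr, Sym2.eq_iff] at h <;>
      first
        | rfl
        | (rcases h with ⟨h1, h2⟩ | ⟨h1, h2⟩ <;>
            first
              | exact absurd h1 (by assumption)
              | exact absurd h1.symm (by assumption)
              | exact absurd h2 (by assumption)
              | exact absurd h2.symm (by assumption)
              | (subst h2; rfl)
              | simp_all)
  let ι : (Unit ⊕ {m : Fin n // m ≠ k ∧ m ≠ l} ⊕ {m : Fin n // m ≠ l ∧ m ≠ k}) ↪ Sym2 (Fin n) :=
    ⟨_, hinj⟩
  have claim : ∀ σ : Sym2 (Fin n) → Bool,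
      ((if degOf σ k = i then (1:ℝ) else 0) * (if degOf σ l = j then (1:ℝ) else 0))
        = gPair p i j (σ ∘ ⇑ι) := by
    intro σ
    rw [deg_split σ k l hkl.symm, deg_split σ l k hkl]
    have hswap : s(l, k) = s(k, l) := Sym2.eq_swap
    rw [hswap]
    rfl
  calc ∑ σ : Sym2 (Fin n) → Bool, (∏ e, W p (σ e)) *
      ((if degOf σ k = i then (1:ℝ) else 0) * (if degOf σ l = j then (1:ℝ) else 0))
      = ∑ σ : Sym2 (Fin n) → Bool, (∏ e, W p (σ e)) * gPair p i j (σ ∘ ⇑ι) :=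
        Fintype.sum_congr _ _ (fun σ => by rw [claim σ])
    _ = ∑ τ, (∏ x, W p (τ x)) * gPair p i j τ := pullback p ι (gPair p i j)
    _ = ∑ b : Bool, W p b
          * (∑ τ : {m : Fin n // m ≠ k ∧ m ≠ l} → Bool, (∏ a, W p (τ a)) * G1fun p i b τ)
          * (∑ τ : {m : Fin n // m ≠ l ∧ m ≠ k} → Bool, (∏ a, W p (τ a)) * G1fun p j b τ) :=
        sum_gPair p i j
    _ = p * Tb n p i * Tb n p j + (1 - p) * Fb n p i * Fb n p j := by
        rw [Fintype.sum_bool]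
        rw [sum_G1, sum_G1, sum_G1, sum_G1]
        rw [card_ne_two k l hkl, card_ne_two l k hkl.symm]
        simp only [W, Tb, Fb, if_true, if_false, Bool.false_eq_true]

noncomputable def Bn (n : ℕ) (p : ℝ) (i : ℕ) : ℝ :=
  (n - 1).choose i * p ^ i * (1 - p) ^ (n - 1 - i)

lemma Egraph_Vdeg (n : ℕ) (p : ℝ) (i : ℕ) :
    Egraph n p (Vdeg n i) = n * Bn n p i := by
  unfold Egraph Vdeg
  have h1 : ∀ σ : Sym2 (Fin n) → Bool,
      (∏ e, if σ e then p else 1 - p) * (∑ k, if degOf σ k = i then (1:ℝ) else 0)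
      = ∑ k, (∏ e, W p (σ e)) * (if degOf σ k = i then (1:ℝ) else 0) := fun σ => by
    rw [Finset.mul_sum]; rfl
  rw [Fintype.sum_congr _ _ h1, Finset.sum_comm,
    Fintype.sum_congr _ _ (fun k => single_vertex n p i k), Finset.sum_const,
    Finset.card_univ, Fintype.card_fin, nsmul_eq_mul]
  rfl

lemma Egraph_VdegMul (n : ℕ) (p : ℝ) (i j : ℕ) :
    Egraph n p (fun σ => Vdeg n i σ * Vdeg n j σ)
      = (if i = j then (n : ℝ) * Bn n p i else 0)
        + ((n * n - n : ℕ) : ℝ) * (p * Tb n p i * Tb n p j + (1 - p) * Fb n p i * Fb n p j) := by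
  classical
  unfold Egraph Vdeg
  have h1 : ∀ σ : Sym2 (Fin n) → Bool,
      (∏ e, if σ e then p else 1 - p) *
        ((∑ k, if degOf σ k = i then (1:ℝ) else 0) * (∑ l, if degOf σ l = j then (1:ℝ) else 0))
      = ∑ z : Fin n × Fin n, (∏ e, W p (σ e)) *
          ((if degOf σ z.1 = i then (1:ℝ) else 0) * (if degOf σ z.2 = j then (1:ℝ) else 0)) := by
    intro σ
    rw [Finset.sum_mul_sum, Finset.mul_sum]
    rw [Fintype.sum_prod_type]
    refine Fintype.sum_congr _ _ (fun k => ?_)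
    rw [Finset.mul_sum]
    rfl
  rw [Fintype.sum_congr _ _ h1, Finset.sum_comm]
  rw [← Finset.sum_filter_add_sum_filter_not univ (fun z : Fin n × Fin n => z.1 = z.2)]
  congr 1
  · -- diagonal
    have hdiag : ∑ z ∈ univ.filter (fun z : Fin n × Fin n => z.1 = z.2),
        (∑ σ : Sym2 (Fin n) → Bool, (∏ e, W p (σ e)) *
          ((if degOf σ z.1 = i then (1:ℝ) else 0) * (if degOf σ z.2 = j then (1:ℝ) else 0)))
        = ∑ k : Fin n, ∑ σ : Sym2 (Fin n) → Bool, (∏ e, W p (σ e)) *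
          ((if degOf σ k = i then (1:ℝ) else 0) * (if degOf σ k = j then (1:ℝ) else 0)) := by
      refine Finset.sum_nbij' (fun z => z.1) (fun k => (k, k)) ?_ ?_ ?_ ?_ ?_
      · intro a _; exact Finset.mem_univ _
      · intro a _; simp
      · intro a ha
        simp only [Finset.mem_filter] at ha
        exact Prod.ext rfl ha.2
      · intro a _; rfl
      · intro a ha
        simp only [Finset.mem_filter] at ha
        rw [← ha.2]
    rw [hdiag]
    by_cases hij : i = j
    · subst hij
      simp only [if_pos rfl]
      have : ∀ k : Fin n, ∀ σ : Sym2 (Fin n) → Bool,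
          ((if degOf σ k = i then (1:ℝ) else 0) * (if degOf σ k = i then (1:ℝ) else 0))
            = (if degOf σ k = i then (1:ℝ) else 0) := by
        intro k σ; by_cases h : degOf σ k = i <;> simp [h]
      calc ∑ k : Fin n, ∑ σ : Sym2 (Fin n) → Bool, (∏ e, W p (σ e)) *
            ((if degOf σ k = i then (1:ℝ) else 0) * (if degOf σ k = i then (1:ℝ) else 0))
          = ∑ k : Fin n, ∑ σ : Sym2 (Fin n) → Bool, (∏ e, W p (σ e)) *
            (if degOf σ k = i then (1:ℝ) else 0) := by
            refine Fintype.sum_congr _ _ (fun k => Fintype.sum_congr _ _ (fun σ => ?_))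
            rw [this k σ]
        _ = (n : ℝ) * Bn n p i := by
            rw [Fintype.sum_congr _ _ (fun k => single_vertex n p i k), Finset.sum_const,
              Finset.card_univ, Fintype.card_fin, nsmul_eq_mul]
            rfl
    · simp only [if_neg hij]
      refine Finset.sum_eq_zero (fun k _ => Finset.sum_eq_zero (fun σ _ => ?_))
      have : ((if degOf σ k = i then (1:ℝ) else 0) * (if degOf σ k = j then (1:ℝ) else 0)) = 0 := by
        by_cases h : degOf σ k = i
        · rw [h]; simp [hij]
        · simp [h]
      rw [this, mul_zero]
  · -- off-diagonal
    have hcard : (univ.filter (fun z : Fin n × Fin n => ¬ z.1 = z.2)).card = n * n - n := by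
      rw [Finset.filter_not, Finset.card_sdiff_of_subset (Finset.filter_subset _ _), Finset.card_univ,
        Fintype.card_prod, Fintype.card_fin]
      congr 1
      rw [Finset.card_nbij' (fun z => z.1) (fun k => (k, k)) ?_ ?_ ?_ ?_, Finset.card_univ,
        Fintype.card_fin]
      · intro a _; exact Finset.mem_univ _
      · intro a _; simp
      · intro a ha
        simp only [Finset.mem_coe, Finset.mem_filter] at ha
        exact Prod.ext rfl ha.2
      · intro a _; rfl
    rw [Finset.sum_congr rfl (fun z hz => pair_vertex n p i j z.1 z.2
      (by simpa using (Finset.mem_filter.mp hz).2)), Finset.sum_const, hcard, nsmul_eq_mul]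

lemma relT (n : ℕ) (hn : 2 ≤ n) (p : ℝ) (i : ℕ) :
    ((n:ℝ) - 1) * (p * Tb n p i) = (i : ℝ) * Bn n p i := by
  cases i with
  | zero => simp [Tb]
  | succ i' =>
    simp only [Tb, Nat.succ_ne_zero, if_false, Nat.add_sub_cancel, Bn]
    have e1 : n - 1 - (i' + 1) = n - 2 - i' := by omega
    rw [e1]
    have key : (n - 1) * (n - 2).choose i' = (n - 1).choose (i' + 1) * (i' + 1) := by
      have h := Nat.add_one_mul_choose_eq (n - 2) i'
      rwa [show n - 2 + 1 = n - 1 by omega] at h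
    have keyR : ((n:ℝ) - 1) * ((n - 2).choose i' : ℝ)
        = ((n - 1).choose (i' + 1) : ℝ) * ((i' : ℝ) + 1) := by
      have : (((n - 1) * (n - 2).choose i' : ℕ) : ℝ)
          = (((n - 1).choose (i' + 1) * (i' + 1) : ℕ) : ℝ) := by exact_mod_cast key
      push_cast [Nat.cast_sub (by omega : 1 ≤ n)] at this
      linarith
    push_cast
    linear_combination (p ^ (i' + 1) * (1 - p) ^ (n - 2 - i')) * keyR

lemma coeffF (n : ℕ) (hn : 2 ≤ n) (i : ℕ) (hi : i ≤ n - 2) :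
    ((n:ℝ) - 1) * ((n - 2).choose i : ℝ) = (((n:ℝ) - 1) - i) * ((n - 1).choose i : ℝ) := by
  cases i with
  | zero => simp
  | succ i' =>
    have pas : (n - 1).choose (i' + 1) = (n - 2).choose i' + (n - 2).choose (i' + 1) := by
      rw [show n - 1 = (n - 2) + 1 by omega]
      exact Nat.choose_succ_succ _ _
    have key : (n - 1) * (n - 2).choose i' = (n - 1).choose (i' + 1) * (i' + 1) := by
      have h := Nat.add_one_mul_choose_eq (n - 2) i'
      rwa [show n - 2 + 1 = n - 1 by omega] at h
    have pasR : ((n - 1).choose (i' + 1) : ℝ)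
        = ((n - 2).choose i' : ℝ) + ((n - 2).choose (i' + 1) : ℝ) := by exact_mod_cast pas
    have keyR : ((n:ℝ) - 1) * ((n - 2).choose i' : ℝ)
        = ((n - 1).choose (i' + 1) : ℝ) * ((i' : ℝ) + 1) := by
      have : (((n - 1) * (n - 2).choose i' : ℕ) : ℝ)
          = (((n - 1).choose (i' + 1) * (i' + 1) : ℕ) : ℝ) := by exact_mod_cast key
      push_cast [Nat.cast_sub (by omega : 1 ≤ n)] at this
      linarith
    push_cast
    linear_combination (-((n:ℝ) - 1)) * pasR - keyR

lemma relF (n : ℕ) (hn : 2 ≤ n) (p : ℝ) (i : ℕ) :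
    ((n:ℝ) - 1) * ((1 - p) * Fb n p i) = (((n:ℝ) - 1) - i) * Bn n p i := by
  rcases le_or_gt i (n - 2) with h | h
  · unfold Fb Bn
    have e1 : n - 1 - i = (n - 2 - i) + 1 := by omega
    rw [e1, pow_succ]
    linear_combination ((1 - p) * p ^ i * (1 - p) ^ (n - 2 - i)) * coeffF n hn i h
  · rcases eq_or_lt_of_le (show n - 1 ≤ i by omega) with h1 | h1
    · unfold Fb Bn
      rw [Nat.choose_eq_zero_of_lt (by omega : n - 2 < i)]
      have : ((n:ℝ) - 1) - i = 0 := by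
        rw [← h1]
        push_cast [Nat.cast_sub (by omega : 1 ≤ n)]
        ring
      rw [this]
      ring
    · unfold Fb Bn
      rw [Nat.choose_eq_zero_of_lt (by omega : n - 2 < i),
        Nat.choose_eq_zero_of_lt (by omega : n - 1 < i)]
      ring

/-- Covariance of degree counts in `G(n, θ/(n-1))`:
`cov(V_i, V_j) = (1/n) E[V_i] E[V_j] ((i-θ)(j-θ)/(θ(1-θ/(n-1))) - 1) + 1{i=j} E[V_i]`. -/
theorem stmt8 (n : ℕ) (hn : 2 ≤ n) (θ : ℝ) (hθ : θ ∈ Set.Ioo (0 : ℝ) 1) (i j : ℕ) :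
    Egraph n (θ / (n - 1)) (fun σ => Vdeg n i σ * Vdeg n j σ)
        - Egraph n (θ / (n - 1)) (Vdeg n i) * Egraph n (θ / (n - 1)) (Vdeg n j)
      = (1 / (n : ℝ)) * Egraph n (θ / (n - 1)) (Vdeg n i)
          * Egraph n (θ / (n - 1)) (Vdeg n j)
          * (((i : ℝ) - θ) * ((j : ℝ) - θ) / (θ * (1 - θ / ((n : ℝ) - 1))) - 1)
        + (if i = j then Egraph n (θ / (n - 1)) (Vdeg n i) else 0) := by
  obtain ⟨hθ0, hθ1⟩ := hθ
  have hn2 : (2:ℝ) ≤ (n:ℝ) := by exact_mod_cast hn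
  have hnR : (0:ℝ) < (n:ℝ) := by linarith
  have hm : (0:ℝ) < (n:ℝ) - 1 := by linarith
  set p := θ / ((n:ℝ) - 1) with hp
  have hp0 : 0 < p := div_pos hθ0 hm
  have hp1 : p < 1 := by
    rw [hp, div_lt_one hm]
    linarith
  have hq0 : 0 < 1 - p := by linarith
  have hθeq : θ = ((n:ℝ) - 1) * p := by
    rw [hp]
    field_simp
  rw [Egraph_VdegMul, Egraph_Vdeg, Egraph_Vdeg]
  have hc : ((n * n - n : ℕ):ℝ) = (n:ℝ) * (n:ℝ) - (n:ℝ) := by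
    have hle : n ≤ n * n := Nat.le_mul_of_pos_left n (by omega)
    push_cast [Nat.cast_sub hle]
    ring
  rw [hc]
  have h1 := relT n hn p i
  have h2 := relT n hn p j
  have h3 := relF n hn p i
  have h4 := relF n hn p j
  have hTi : Tb n p i = (i:ℝ) * Bn n p i / (((n:ℝ) - 1) * p) := by
    rw [eq_div_iff (by positivity)]
    linear_combination h1
  have hTj : Tb n p j = (j:ℝ) * Bn n p j / (((n:ℝ) - 1) * p) := by
    rw [eq_div_iff (by positivity)]
    linear_combination h2
  have hFi : Fb n p i = (((n:ℝ) - 1) - i) * Bn n p i / (((n:ℝ) - 1) * (1 - p)) := by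
    rw [eq_div_iff (by positivity)]
    linear_combination h3
  have hFj : Fb n p j = (((n:ℝ) - 1) - j) * Bn n p j / (((n:ℝ) - 1) * (1 - p)) := by
    rw [eq_div_iff (by positivity)]
    linear_combination h4
  rw [hTi, hTj, hFi, hFj, hθeq]
  have hpne : p ≠ 0 := ne_of_gt hp0
  have hqne : (1:ℝ) - p ≠ 0 := ne_of_gt hq0
  have hmne : (n:ℝ) - 1 ≠ 0 := ne_of_gt hm
  have hnne : (n:ℝ) ≠ 0 := ne_of_gt hnR
  by_cases hij : i = j
  · simp only [if_pos hij]
    subst hij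
    field_simp
    ring
  · simp only [if_neg hij]
    field_simp
    ring
end

section
/- In the voxel model of a random cubical complex on the d-dimensional torus lattice with n^d unit cubes each retained independently with probability p, the expected j-th intrinsic volume equals E[V_j(𝒞)] = Σ_{δ=j}^{d} C(d,δ) n^d (1 − q^{2^{d−δ}}) (−1)^{δ−j} C(δ,j), where q = 1−p. -/
open Finset
open scoped Classical

/-- Dimension of a cell of the cubical lattice: a cell is encoded by its anchor
`z : Fin d → ZMod n` (torus coordinates) together with `s : Fin d → Bool`
recording in which coordinate directions the cell is extended. -/
def cellDim {d : ℕ} (s : Fin d → Bool) : ℕ :=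
  (Finset.univ.filter (fun i => s i = true)).card

/-- The closed `d`-cube anchored at `w` contains the open cell `(z, s)` as a face. -/
def containsCell {d n : ℕ} (w z : Fin d → ZMod n) (s : Fin d → Bool) : Prop :=
  ∀ i, if s i then w i = z i else (w i = z i ∨ w i = z i - 1)

/-- Indicator that the open cell `(z,s)` belongs to the voxel complex `𝒞`
determined by the retained cubes `σ`. -/
noncomputable def inComplex {d n : ℕ} (σ : (Fin d → ZMod n) → Bool)
    (z : Fin d → ZMod n) (s : Fin d → Bool) : ℝ :=
  if ∃ w, σ w = true ∧ containsCell w z s then 1 else 0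

/-- The `j`-th intrinsic volume `V_j(𝒞) = Σ_D ξ_{D,j}` of the voxel complex. -/
noncomputable def Vvox (d n : ℕ) [NeZero n] (j : ℕ)
    (σ : (Fin d → ZMod n) → Bool) : ℝ :=
  ∑ z : Fin d → ZMod n, ∑ s : Fin d → Bool,
    (-1 : ℝ) ^ (cellDim s - j) * ((cellDim s).choose j : ℝ) * inComplex σ z s

/-- Expectation: each of the `n^d` cubes is retained independently with
probability `p`. -/
noncomputable def Evox (d n : ℕ) [NeZero n] (p : ℝ)
    (F : ((Fin d → ZMod n) → Bool) → ℝ) : ℝ :=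
  ∑ σ : (Fin d → ZMod n) → Bool, (∏ w, if σ w then p else 1 - p) * F σ

section aux
variable {d n : ℕ} [NeZero n]

noncomputable def Wset (z : Fin d → ZMod n) (s : Fin d → Bool) :
    Finset (Fin d → ZMod n) :=
  Fintype.piFinset (fun i => if s i then {z i} else {z i, z i - 1})

lemma mem_Wset {z w : Fin d → ZMod n} {s : Fin d → Bool} :
    w ∈ Wset z s ↔ containsCell w z s := by
  simp only [Wset, Fintype.mem_piFinset, containsCell]
  refine forall_congr' fun i => ?_
  split <;> simp

lemma cellDim_le (s : Fin d → Bool) : cellDim s ≤ d := by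
  classical
  calc cellDim s ≤ (univ : Finset (Fin d)).card := card_filter_le _ _
  _ = d := by simp

lemma card_Wset (hn : 3 ≤ n) (z : Fin d → ZMod n) (s : Fin d → Bool) :
    (Wset z s).card = 2 ^ (d - cellDim s) := by
  haveI : Fact (1 < n) := ⟨by omega⟩
  have hne : ∀ i, z i ≠ z i - 1 := by
    intro i h
    have h1 : (1 : ZMod n) = 0 := sub_eq_self.mp h.symm
    exact one_ne_zero h1
  rw [Wset, Fintype.card_piFinset]
  have hc : ∀ i, ((if s i then ({z i} : Finset (ZMod n)) else {z i, z i - 1})).card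
      = if s i then 1 else 2 := by
    intro i
    split
    · simp
    · rw [card_insert_of_notMem (by simp [hne i]), card_singleton]
  simp_rw [hc]
  rw [Finset.prod_ite, Finset.prod_const, Finset.prod_const, one_pow, one_mul]
  congr 1
  have := Finset.card_filter_add_card_filter_not
    (s := (univ : Finset (Fin d))) (p := fun i => s i = true)
  simp only [card_univ, Fintype.card_fin] at this
  have hcd : cellDim s = (univ.filter (fun i => s i = true)).card := rfl
  omega

lemma exp_prod (p : ℝ) (W : Finset (Fin d → ZMod n)) :
    ∑ σ : (Fin d → ZMod n) → Bool, (∏ w, if σ w then p else 1 - p) *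
      ∏ w ∈ W, (if σ w then (0:ℝ) else 1) = (1 - p) ^ W.card := by
  calc ∑ σ : (Fin d → ZMod n) → Bool, (∏ w, if σ w then p else 1 - p) *
      ∏ w ∈ W, (if σ w then (0:ℝ) else 1)
      = ∑ σ : (Fin d → ZMod n) → Bool, ∏ w,
        ((if σ w then p else 1 - p) * (if w ∈ W then (if σ w then (0:ℝ) else 1) else 1)) := by
        refine sum_congr rfl fun σ _ => ?_
        rw [prod_mul_distrib, prod_ite_mem, univ_inter]
    _ = ∏ w : Fin d → ZMod n, ∑ b : Bool,
        ((if b then p else 1 - p) * (if w ∈ W then (if b then (0:ℝ) else 1) else 1)) := by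
        rw [Finset.prod_univ_sum]
        rw [Fintype.piFinset_univ]
    _ = ∏ w : Fin d → ZMod n, (if w ∈ W then (1 - p) else 1) := by
        refine prod_congr rfl fun w _ => ?_
        rw [Fintype.sum_bool]
        by_cases hw : w ∈ W <;> simp [hw] <;> ring
    _ = (1 - p) ^ W.card := by
        rw [prod_ite_mem, univ_inter, prod_const]

lemma exp_one (p : ℝ) :
    ∑ σ : (Fin d → ZMod n) → Bool, (∏ w, if σ w then p else 1 - p) = 1 := by
  have h := exp_prod (d := d) (n := n) p ∅
  simpa using h

lemma exp_inComplex (hn : 3 ≤ n) (p : ℝ) (z : Fin d → ZMod n) (s : Fin d → Bool) :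
    ∑ σ : (Fin d → ZMod n) → Bool, (∏ w, if σ w then p else 1 - p) * inComplex σ z s
      = 1 - (1 - p) ^ (2 ^ (d - cellDim s)) := by
  have hB : ∀ σ : (Fin d → ZMod n) → Bool,
      inComplex σ z s = 1 - ∏ w ∈ Wset z s, (if σ w then (0:ℝ) else 1) := by
    intro σ
    unfold inComplex
    by_cases h : ∃ w, σ w = true ∧ containsCell w z s
    · obtain ⟨w, hw1, hw2⟩ := h
      rw [if_pos ⟨w, hw1, hw2⟩, Finset.prod_eq_zero (mem_Wset.mpr hw2) (by simp [hw1])]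
      ring
    · rw [if_neg h, Finset.prod_eq_one, sub_self]
      intro w hw
      rw [if_neg]
      intro hσ
      exact h ⟨w, hσ, mem_Wset.mp hw⟩
  simp_rw [hB, mul_sub, mul_one, Finset.sum_sub_distrib, exp_one, exp_prod,
    card_Wset hn]

lemma card_cellDim_eq (δ : ℕ) :
    ((univ : Finset (Fin d → Bool)).filter (fun s => cellDim s = δ)).card
      = d.choose δ := by
  classical
  have hdc : d.choose δ = (Finset.powersetCard δ (univ : Finset (Fin d))).card := by
    rw [Finset.card_powersetCard, card_univ, Fintype.card_fin]
  rw [hdc]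
  refine Finset.card_bij' (fun s _ => univ.filter (fun i => s i = true))
    (fun t _ => fun i => decide (i ∈ t)) ?_ ?_ ?_ ?_
  · intro s hs
    simp only [mem_filter, mem_univ, true_and] at hs
    simp [Finset.mem_powersetCard, ← hs, cellDim]
  · intro t ht
    simp only [Finset.mem_powersetCard] at ht
    simp only [mem_filter, mem_univ, true_and]
    unfold cellDim
    rw [show (univ.filter (fun i => decide (i ∈ t) = true)) = t by
      ext i; simp]
    exact ht.2
  · intro s hs
    funext i
    by_cases h : s i = true <;> simp [h]
  · intro t ht
    ext i; simp

end aux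

/-- Expected intrinsic volume in the voxel model:
`E[V_j(𝒞)] = Σ_{δ=j}^d C(d,δ) n^d (1 - q^{2^{d-δ}}) (-1)^{δ-j} C(δ,j)`, `q = 1-p`. -/
theorem stmt10 (d n : ℕ) [NeZero n] (hn : 3 ≤ n) (hd : 1 ≤ d)
    (j : ℕ) (hj : j ≤ d) (p : ℝ) (hp : p ∈ Set.Ioo (0 : ℝ) 1) :
    Evox d n p (Vvox d n j)
      = ∑ δ ∈ Finset.Icc j d,
          (d.choose δ : ℝ) * (n : ℝ) ^ d * (1 - (1 - p) ^ (2 ^ (d - δ)))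
            * (-1 : ℝ) ^ (δ - j) * (δ.choose j : ℝ) := by
  have key : ∀ (z : Fin d → ZMod n) (s : Fin d → Bool),
      ∑ σ : (Fin d → ZMod n) → Bool, (∏ w, if σ w then p else 1 - p) *
        ((-1 : ℝ) ^ (cellDim s - j) * ((cellDim s).choose j : ℝ) * inComplex σ z s)
      = (-1 : ℝ) ^ (cellDim s - j) * ((cellDim s).choose j : ℝ) *
          (1 - (1 - p) ^ (2 ^ (d - cellDim s))) := by
    intro z s
    have hre : ∀ σ : (Fin d → ZMod n) → Bool,
        (∏ w, if σ w then p else 1 - p) *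
          ((-1 : ℝ) ^ (cellDim s - j) * ((cellDim s).choose j : ℝ) * inComplex σ z s)
        = (-1 : ℝ) ^ (cellDim s - j) * ((cellDim s).choose j : ℝ) *
            ((∏ w, if σ w then p else 1 - p) * inComplex σ z s) := by
      intro σ; ring
    simp_rw [hre, ← Finset.mul_sum, exp_inComplex hn]
  have step1 : Evox d n p (Vvox d n j)
      = ∑ z : Fin d → ZMod n, ∑ s : Fin d → Bool,
          (-1 : ℝ) ^ (cellDim s - j) * ((cellDim s).choose j : ℝ) *
            (1 - (1 - p) ^ (2 ^ (d - cellDim s))) := by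
    unfold Evox Vvox
    simp_rw [Finset.mul_sum]
    rw [Finset.sum_comm]
    refine Finset.sum_congr rfl fun z _ => ?_
    rw [Finset.sum_comm]
    exact Finset.sum_congr rfl fun s _ => key z s
  rw [step1]
  have step2 : ∑ z : Fin d → ZMod n, ∑ s : Fin d → Bool,
      (-1 : ℝ) ^ (cellDim s - j) * ((cellDim s).choose j : ℝ) *
        (1 - (1 - p) ^ (2 ^ (d - cellDim s)))
      = (n : ℝ) ^ d * ∑ s : Fin d → Bool,
          (-1 : ℝ) ^ (cellDim s - j) * ((cellDim s).choose j : ℝ) *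
            (1 - (1 - p) ^ (2 ^ (d - cellDim s))) := by
    rw [Finset.sum_const, card_univ, Fintype.card_fun, ZMod.card, Fintype.card_fin,
      nsmul_eq_mul]
    push_cast
    ring
  rw [step2]
  -- group cells by dimension
  have step3 : ∑ s : Fin d → Bool,
      (-1 : ℝ) ^ (cellDim s - j) * ((cellDim s).choose j : ℝ) *
        (1 - (1 - p) ^ (2 ^ (d - cellDim s)))
      = ∑ δ ∈ Finset.range (d + 1), (d.choose δ : ℝ) *
          ((-1 : ℝ) ^ (δ - j) * ((δ).choose j : ℝ) * (1 - (1 - p) ^ (2 ^ (d - δ)))) := by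
    rw [← Finset.sum_fiberwise_of_maps_to
      (g := fun s : Fin d → Bool => cellDim s) (t := Finset.range (d + 1))
      (fun s _ => Finset.mem_range.mpr (Nat.lt_succ_of_le (cellDim_le s)))]
    refine Finset.sum_congr rfl fun δ _ => ?_
    rw [Finset.sum_congr rfl (fun s hs => ?_), Finset.sum_const, card_cellDim_eq,
      nsmul_eq_mul]
    · simp only [Finset.mem_filter] at hs
      rw [hs.2]
  rw [step3, Finset.mul_sum]
  have hsub : Finset.Icc j d ⊆ Finset.range (d + 1) := fun δ hδ => by
    simp only [Finset.mem_Icc] at hδ; exact Finset.mem_range.mpr (by omega)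
  calc ∑ δ ∈ Finset.range (d + 1), (n : ℝ) ^ d * ((d.choose δ : ℝ) *
          ((-1 : ℝ) ^ (δ - j) * ((δ).choose j : ℝ) * (1 - (1 - p) ^ (2 ^ (d - δ)))))
      = ∑ δ ∈ Finset.range (d + 1),
          (d.choose δ : ℝ) * (n : ℝ) ^ d * (1 - (1 - p) ^ (2 ^ (d - δ)))
            * (-1 : ℝ) ^ (δ - j) * (δ.choose j : ℝ) :=
        Finset.sum_congr rfl fun δ _ => by ring
    _ = ∑ δ ∈ Finset.Icc j d,
          (d.choose δ : ℝ) * (n : ℝ) ^ d * (1 - (1 - p) ^ (2 ^ (d - δ)))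
            * (-1 : ℝ) ^ (δ - j) * (δ.choose j : ℝ) := by
        refine (Finset.sum_subset hsub fun δ hδ hδ' => ?_).symm
        simp only [Finset.mem_range] at hδ
        simp only [Finset.mem_Icc, not_and, not_le] at hδ'
        have hlt : δ < j := by omega
        rw [Nat.choose_eq_zero_of_lt hlt]
        simp
end

section
/- Let N_{a,b,δ} := Σ_{ℓ=0}^{δ} (−1)^{δ−ℓ} C(δ,ℓ) C(ℓ,a) C(ℓ,b) 2^{δ+ℓ−a−b} for 0 ≤ a, b ≤ δ. Then for all 0 ≤ a, b ≤ m, Σ_{δ = max(a,b)}^{m} C(m,δ) 2^{m−δ} N_{a,b,δ} = C(m,a) 2^{m−a} · C(m,b) 2^{m−b}; i.e., summing N_{a,b,δ} over all δ-faces of an m-cube recovers the total number of pairs of an a-face and a b-face of the m-cube. -/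
open Finset

/-- `N_{a,b,δ} := Σ_{ℓ=0}^δ (-1)^{δ-ℓ} C(δ,ℓ) C(ℓ,a) C(ℓ,b) 2^{δ+ℓ-a-b}`. -/
def Nabδ (a b δ : ℕ) : ℤ :=
  ∑ ℓ ∈ Finset.range (δ + 1),
    (-1 : ℤ) ^ (δ - ℓ) * (δ.choose ℓ : ℤ) * (ℓ.choose a : ℤ) * (ℓ.choose b : ℤ)
      * 2 ^ (δ + ℓ - a - b)

/-- Summing `N_{a,b,δ}` over all `δ`-faces of an `m`-cube recovers the total
number of pairs of an `a`-face and a `b`-face: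
`Σ_{δ=max(a,b)}^m C(m,δ) 2^{m-δ} N_{a,b,δ} = C(m,a) 2^{m-a} ⬝ C(m,b) 2^{m-b}`. -/
theorem stmt15 (a b m : ℕ) (ha : a ≤ m) (hb : b ≤ m) :
    ∑ δ ∈ Finset.Icc (max a b) m, (m.choose δ : ℤ) * 2 ^ (m - δ) * Nabδ a b δ
      = (m.choose a : ℤ) * 2 ^ (m - a) * ((m.choose b : ℤ) * 2 ^ (m - b)) := by
  -- Step 1: extend the sum over `δ` down to `0`.
  have h1 : ∑ δ ∈ Finset.Icc (max a b) m, (m.choose δ : ℤ) * 2 ^ (m - δ) * Nabδ a b δ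
      = ∑ δ ∈ Finset.range (m + 1), (m.choose δ : ℤ) * 2 ^ (m - δ) * Nabδ a b δ := by
    apply Finset.sum_subset
    · intro x hx
      simp only [Finset.mem_Icc, Finset.mem_range] at hx ⊢
      omega
    · intro x hx hx'
      simp only [Finset.mem_Icc, Finset.mem_range, max_le_iff, not_and, not_le] at hx hx'
      have hN : Nabδ a b x = 0 := by
        unfold Nabδ
        apply Finset.sum_eq_zero
        intro ℓ hℓ
        simp only [Finset.mem_range] at hℓ
        have : ℓ.choose a = 0 ∨ ℓ.choose b = 0 := by
          rcases max_cases a b with ⟨h, _⟩ | ⟨h, _⟩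
          · left; exact Nat.choose_eq_zero_of_lt (by omega)
          · right; exact Nat.choose_eq_zero_of_lt (by omega)
        rcases this with h | h <;> simp [h]
      rw [hN, mul_zero]
  rw [h1]
  -- Step 2: expand `Nabδ`, distribute, and swap sums.
  have h2 : ∑ δ ∈ Finset.range (m + 1), (m.choose δ : ℤ) * 2 ^ (m - δ) * Nabδ a b δ
      = ∑ ℓ ∈ Finset.range (m + 1), ∑ δ ∈ Finset.Icc ℓ m,
          (m.choose δ : ℤ) * 2 ^ (m - δ) *
            ((-1 : ℤ) ^ (δ - ℓ) * (δ.choose ℓ : ℤ) * (ℓ.choose a : ℤ) * (ℓ.choose b : ℤ)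
              * 2 ^ (δ + ℓ - a - b)) := by
    unfold Nabδ
    rw [← Finset.sum_comm' (t := fun δ => Finset.range (δ + 1))
      (s' := fun ℓ => Finset.Icc ℓ m)]
    · exact Finset.sum_congr rfl fun δ _ => (Finset.mul_sum _ _ _)
    · intro δ ℓ
      simp only [Finset.mem_range, Finset.mem_Icc]
      omega
  rw [h2]
  -- Step 3: evaluate the inner sum for each `ℓ`.
  have h3 : ∀ ℓ ∈ Finset.range (m + 1),
      (∑ δ ∈ Finset.Icc ℓ m,
          (m.choose δ : ℤ) * 2 ^ (m - δ) *
            ((-1 : ℤ) ^ (δ - ℓ) * (δ.choose ℓ : ℤ) * (ℓ.choose a : ℤ) * (ℓ.choose b : ℤ)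
              * 2 ^ (δ + ℓ - a - b)))
      = if ℓ = m then
          (m.choose a : ℤ) * 2 ^ (m - a) * ((m.choose b : ℤ) * 2 ^ (m - b)) else 0 := by
    intro ℓ hℓ
    simp only [Finset.mem_range] at hℓ
    have hℓm : ℓ ≤ m := by omega
    by_cases hab : a ≤ ℓ ∧ b ≤ ℓ
    · obtain ⟨haℓ, hbℓ⟩ := hab
      -- each term simplifies: combine the powers of 2 and split the binomials
      have hterm : ∀ δ ∈ Finset.Icc ℓ m,
          (m.choose δ : ℤ) * 2 ^ (m - δ) *
            ((-1 : ℤ) ^ (δ - ℓ) * (δ.choose ℓ : ℤ) * (ℓ.choose a : ℤ) * (ℓ.choose b : ℤ)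
              * 2 ^ (δ + ℓ - a - b))
          = ((m.choose ℓ : ℤ) * (ℓ.choose a : ℤ) * (ℓ.choose b : ℤ) * 2 ^ (m + ℓ - a - b))
              * ((-1 : ℤ) ^ (δ - ℓ) * ((m - ℓ).choose (δ - ℓ) : ℤ)) := by
        intro δ hδ
        simp only [Finset.mem_Icc] at hδ
        obtain ⟨hℓδ, hδm⟩ := hδ
        have hpow : (2 : ℤ) ^ (m - δ) * 2 ^ (δ + ℓ - a - b) = 2 ^ (m + ℓ - a - b) := by
          rw [← pow_add]
          congr 1
          omega
        have hch : (m.choose δ : ℤ) * (δ.choose ℓ : ℤ)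
            = (m.choose ℓ : ℤ) * ((m - ℓ).choose (δ - ℓ) : ℤ) := by
          have := Nat.choose_mul (n := m) hℓδ
          exact_mod_cast congrArg (Nat.cast : ℕ → ℤ) this
        calc (m.choose δ : ℤ) * 2 ^ (m - δ) *
              ((-1 : ℤ) ^ (δ - ℓ) * (δ.choose ℓ : ℤ) * (ℓ.choose a : ℤ) * (ℓ.choose b : ℤ)
                * 2 ^ (δ + ℓ - a - b))
            = ((m.choose δ : ℤ) * (δ.choose ℓ : ℤ)) * (ℓ.choose a : ℤ) * (ℓ.choose b : ℤ)
                * ((2 : ℤ) ^ (m - δ) * 2 ^ (δ + ℓ - a - b)) * (-1 : ℤ) ^ (δ - ℓ) := by ring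
          _ = ((m.choose ℓ : ℤ) * ((m - ℓ).choose (δ - ℓ) : ℤ)) * (ℓ.choose a : ℤ)
                * (ℓ.choose b : ℤ) * 2 ^ (m + ℓ - a - b) * (-1 : ℤ) ^ (δ - ℓ) := by
              rw [hch, hpow]
          _ = _ := by ring
      rw [Finset.sum_congr rfl hterm, ← Finset.mul_sum]
      -- reindex the alternating sum
      have hre : ∑ δ ∈ Finset.Icc ℓ m, (-1 : ℤ) ^ (δ - ℓ) * ((m - ℓ).choose (δ - ℓ) : ℤ)
          = ∑ j ∈ Finset.range (m - ℓ + 1), (-1 : ℤ) ^ j * ((m - ℓ).choose j : ℤ) := by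
        rw [show Finset.Icc ℓ m = Finset.map ⟨fun j => ℓ + j, add_right_injective ℓ⟩
            (Finset.range (m - ℓ + 1)) from ?_]
        · rw [Finset.sum_map]
          apply Finset.sum_congr rfl
          intro j hj
          simp only [Function.Embedding.coeFn_mk, Nat.add_sub_cancel_left]
        · ext x
          simp only [Finset.mem_Icc, Finset.mem_map, Finset.mem_range,
            Function.Embedding.coeFn_mk]
          constructor
          · intro hx; exact ⟨x - ℓ, by omega, by omega⟩
          · rintro ⟨j, hj, rfl⟩; omega
      rw [hre, Int.alternating_sum_range_choose]
      by_cases hm : ℓ = m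
      · rw [hm]
        simp only [Nat.sub_self, if_pos rfl, mul_one, if_pos hm]
        rw [Nat.choose_self]
        push_cast
        rw [show m + m - a - b = (m - a) + (m - b) by omega, pow_add]
        ring
      · rw [if_neg (by omega), if_neg hm, mul_zero]
    · -- some binomial coefficient vanishes
      have hz : ℓ.choose a = 0 ∨ ℓ.choose b = 0 := by
        rcases not_and_or.mp hab with h | h
        · left; exact Nat.choose_eq_zero_of_lt (by omega)
        · right; exact Nat.choose_eq_zero_of_lt (by omega)
      have hne : ℓ ≠ m := by
        rintro rfl
        rcases not_and_or.mp hab with h | h <;> omega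
      rw [if_neg hne]
      apply Finset.sum_eq_zero
      intro δ _
      rcases hz with h | h <;> simp [h]
  rw [Finset.sum_congr rfl h3, Finset.sum_ite_eq' (Finset.range (m + 1)) m]
  rw [if_pos (Finset.self_mem_range_succ m)]
end
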